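/- For all θ in [0, 1/2], 4θ(1-θ) ≤ -θ log₂ θ - (1-θ) log₂(1-θ) ≤ 2√(θ(1-θ)). (The binary entropy function lies between the square of the Bhattacharyya-type function and the function itself.) -/

import Mathlib

open Real Set

/-! Auxiliary functions for the lower bound (in the variable `x = 1 - 2θ`). -/

noncomputable def pA (x : ℝ) : ℝ :=
  2 * Real.log 2 * x ^ 2 - ((1 + x) * Real.log (1 + x) + (1 - x) * Real.log (1 - x))

noncomputable def P1 (x : ℝ) : ℝ :=
  4 * Real.log 2 * x - Real.log (1 + x) + Real.log (1 - x)

noncomputable def P2 (x : ℝ) : ℝ :=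
  4 * Real.log 2 - (1 / (1 + x) + 1 / (1 - x))

/-! Auxiliary functions for the upper bound (in the variable `u = √(θ/(1-θ))`). -/

noncomputable def fB (u : ℝ) : ℝ :=
  2 * Real.log 2 * u + u ^ 2 * Real.log (u ^ 2) - (1 + u ^ 2) * Real.log (1 + u ^ 2)

noncomputable def F1 (u : ℝ) : ℝ :=
  2 * Real.log 2 + 2 * u * Real.log (u ^ 2) - 2 * u * Real.log (1 + u ^ 2)

noncomputable def F2 (u : ℝ) : ℝ :=
  2 * Real.log (u ^ 2) - 2 * Real.log (1 + u ^ 2) + 4 / (1 + u ^ 2)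

lemma continuous_pA : Continuous pA := by
  have h1 : Continuous fun x : ℝ => (1 + x) * Real.log (1 + x) :=
    Real.continuous_mul_log.comp (continuous_const.add continuous_id)
  have h2 : Continuous fun x : ℝ => (1 - x) * Real.log (1 - x) :=
    Real.continuous_mul_log.comp (continuous_const.sub continuous_id)
  unfold pA
  fun_prop

lemma continuous_fB : Continuous fB := by
  have h1 : Continuous fun u : ℝ => u ^ 2 * Real.log (u ^ 2) :=
    Real.continuous_mul_log.comp (continuous_pow 2)
  have h2 : Continuous fun u : ℝ => (1 + u ^ 2) * Real.log (1 + u ^ 2) :=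
    Real.continuous_mul_log.comp (continuous_const.add (continuous_pow 2))
  unfold fB
  fun_prop

lemma hasDerivAt_pA {x : ℝ} (hx : x ∈ Ioo (0:ℝ) 1) : HasDerivAt pA (P1 x) x := by
  obtain ⟨hx0, hx1⟩ := hx
  have h1x : (0:ℝ) < 1 + x := by linarith
  have h1x' : (0:ℝ) < 1 - x := by linarith
  have d1 : HasDerivAt (fun y : ℝ => (1 + y) * Real.log (1 + y))
      ((Real.log (1 + x) + 1) * 1) x := by
    exact (Real.hasDerivAt_mul_log h1x.ne').comp x ((hasDerivAt_id x).const_add 1)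
  have d2 : HasDerivAt (fun y : ℝ => (1 - y) * Real.log (1 - y))
      ((Real.log (1 - x) + 1) * (-1)) x := by
    exact (Real.hasDerivAt_mul_log h1x'.ne').comp x ((hasDerivAt_id x).const_sub 1)
  have d0 : HasDerivAt (fun y : ℝ => 2 * Real.log 2 * y ^ 2)
      (2 * Real.log 2 * (2 * x)) x := by
    simpa using ((hasDerivAt_pow 2 x).const_mul (2 * Real.log 2))
  have := d0.sub (d1.add d2)
  refine this.congr_deriv ?_
  unfold P1; ring

lemma hasDerivAt_P1 {x : ℝ} (hx : x ∈ Ioo (0:ℝ) 1) : HasDerivAt P1 (P2 x) x := by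
  obtain ⟨hx0, hx1⟩ := hx
  have h1x : (0:ℝ) < 1 + x := by linarith
  have h1x' : (0:ℝ) < 1 - x := by linarith
  have d0 : HasDerivAt (fun y : ℝ => 4 * Real.log 2 * y) (4 * Real.log 2) x := by
    simpa using (hasDerivAt_id x).const_mul (4 * Real.log 2)
  have d1 : HasDerivAt (fun y : ℝ => Real.log (1 + y)) (1 / (1 + x)) x := by
    simpa using ((hasDerivAt_id x).const_add 1).log h1x.ne'
  have d2 : HasDerivAt (fun y : ℝ => Real.log (1 - y)) (-1 / (1 - x)) x := by
    simpa using ((hasDerivAt_id x).const_sub 1).log h1x'.ne'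
  have := (d0.sub d1).add d2
  refine this.congr_deriv ?_
  unfold P2; field_simp; ring

lemma hasDerivAt_fB {u : ℝ} (hu : u ∈ Ioo (0:ℝ) 1) : HasDerivAt fB (F1 u) u := by
  obtain ⟨hu0, hu1⟩ := hu
  have hsq : (0:ℝ) < u ^ 2 := by positivity
  have hsq1 : (0:ℝ) < 1 + u ^ 2 := by positivity
  have dsq : HasDerivAt (fun y : ℝ => y ^ 2) (2 * u) u := by
    simpa using hasDerivAt_pow 2 u
  have dlog1 : HasDerivAt (fun y : ℝ => Real.log (y ^ 2)) (2 * u / u ^ 2) u :=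
    dsq.log hsq.ne'
  have dlog2 : HasDerivAt (fun y : ℝ => Real.log (1 + y ^ 2)) (2 * u / (1 + u ^ 2)) u :=
    (dsq.const_add 1).log hsq1.ne'
  have d1 : HasDerivAt (fun y : ℝ => y ^ 2 * Real.log (y ^ 2))
      (2 * u * Real.log (u ^ 2) + u ^ 2 * (2 * u / u ^ 2)) u := dsq.mul dlog1
  have d2 : HasDerivAt (fun y : ℝ => (1 + y ^ 2) * Real.log (1 + y ^ 2))
      (2 * u * Real.log (1 + u ^ 2) + (1 + u ^ 2) * (2 * u / (1 + u ^ 2))) u :=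
    (dsq.const_add 1).mul dlog2
  have d0 : HasDerivAt (fun y : ℝ => 2 * Real.log 2 * y) (2 * Real.log 2) u := by
    simpa using (hasDerivAt_id u).const_mul (2 * Real.log 2)
  have := (d0.add d1).sub d2
  refine this.congr_deriv ?_
  unfold F1; field_simp; ring

lemma hasDerivAt_F1 {u : ℝ} (hu : u ∈ Ioo (0:ℝ) 1) : HasDerivAt F1 (F2 u) u := by
  obtain ⟨hu0, hu1⟩ := hu
  have hsq : (0:ℝ) < u ^ 2 := by positivity
  have hsq1 : (0:ℝ) < 1 + u ^ 2 := by positivity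
  have dsq : HasDerivAt (fun y : ℝ => y ^ 2) (2 * u) u := by
    simpa using hasDerivAt_pow 2 u
  have dlog1 : HasDerivAt (fun y : ℝ => Real.log (y ^ 2)) (2 * u / u ^ 2) u :=
    dsq.log hsq.ne'
  have dlog2 : HasDerivAt (fun y : ℝ => Real.log (1 + y ^ 2)) (2 * u / (1 + u ^ 2)) u :=
    (dsq.const_add 1).log hsq1.ne'
  have did : HasDerivAt (fun y : ℝ => 2 * y) 2 u := by
    simpa using (hasDerivAt_id u).const_mul 2
  have d1 : HasDerivAt (fun y : ℝ => 2 * y * Real.log (y ^ 2))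
      (2 * Real.log (u ^ 2) + 2 * u * (2 * u / u ^ 2)) u := by
    exact did.mul dlog1
  have d2 : HasDerivAt (fun y : ℝ => 2 * y * Real.log (1 + y ^ 2))
      (2 * Real.log (1 + u ^ 2) + 2 * u * (2 * u / (1 + u ^ 2))) u := by
    exact did.mul dlog2
  have := (d1.const_add (2 * Real.log 2)).sub d2
  refine this.congr_deriv ?_
  unfold F2; field_simp; ring


lemma hL2 : (0:ℝ) < Real.log 2 := Real.log_pos one_lt_two

lemma P1_zero : P1 0 = 0 := by norm_num [P1]

lemma P1_half_pos : 0 < P1 (1/2) := by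
  unfold P1
  rw [show (1:ℝ) + 1/2 = 3/2 by norm_num, show (1:ℝ) - 1/2 = 1/2 by norm_num,
    one_div, Real.log_inv]
  have h := Real.log_lt_log (by norm_num : (0:ℝ) < 3/2) (by norm_num : (3:ℝ)/2 < 2)
  linarith

lemma P1_neg : P1 (7/8) < 0 := by
  unfold P1
  rw [show (1:ℝ) + 7/8 = 15/8 by norm_num, show (1:ℝ) - 7/8 = 1/8 by norm_num,
    show (15:ℝ)/8 = 15/8 from rfl, Real.log_div (by norm_num) (by norm_num),
    one_div, Real.log_inv, show (8:ℝ) = 2^3 by norm_num, Real.log_pow]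
  have h1 : Real.log 128 < Real.log 225 := Real.log_lt_log (by norm_num) (by norm_num)
  have h2 : Real.log 128 = 7 * Real.log 2 := by
    rw [show (128:ℝ) = 2^7 by norm_num, Real.log_pow]; norm_num
  have h3 : Real.log 225 = 2 * Real.log 15 := by
    rw [show (225:ℝ) = 15^2 by norm_num, Real.log_pow]; norm_num
  push_cast
  linarith

lemma antitoneOn_P2 : AntitoneOn P2 (Ioo (0:ℝ) 1) := by
  intro a ha b hb hab
  unfold P2
  have h1a : (0:ℝ) < 1 + a := by linarith [ha.1]
  have h1a' : (0:ℝ) < 1 - a := by linarith [ha.2]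
  have h1b : (0:ℝ) < 1 + b := by linarith [hb.1]
  have h1b' : (0:ℝ) < 1 - b := by linarith [hb.2]
  have h2a : (1:ℝ) - a^2 ≠ 0 := by nlinarith
  have h2b' : (1:ℝ) - b^2 ≠ 0 := by nlinarith
  have ea : 1/(1+a) + 1/(1-a) = 2/(1-a^2) := by field_simp; ring
  have eb : 1/(1+b) + 1/(1-b) = 2/(1-b^2) := by field_simp; ring
  rw [ea, eb]
  have hpb : (0:ℝ) < 1 - b^2 := by nlinarith [hb.1, hb.2]
  have hle : 1 - b^2 ≤ 1 - a^2 := by nlinarith [ha.1]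
  have := div_le_div_of_nonneg_left (by norm_num : (0:ℝ) ≤ 2) hpb hle
  linarith

lemma concaveOn_P1 : ConcaveOn ℝ (Ico (0:ℝ) 1) P1 := by
  apply AntitoneOn.concaveOn_of_deriv (convex_Ico 0 1)
  · unfold P1
    have c1 : ContinuousOn (fun x : ℝ => Real.log (1 + x)) (Ico (0:ℝ) 1) :=
      (continuousOn_const.add continuousOn_id).log fun x hx => by
        show (1:ℝ) + x ≠ 0; intro h; nlinarith [hx.1, hx.2]
    have c2 : ContinuousOn (fun x : ℝ => Real.log (1 - x)) (Ico (0:ℝ) 1) :=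
      (continuousOn_const.sub continuousOn_id).log fun x hx => by
        show (1:ℝ) - x ≠ 0; intro h; nlinarith [hx.1, hx.2]
    exact ((continuousOn_const.mul continuousOn_id).sub c1).add c2
  · rw [interior_Ico]
    intro x hx
    exact (hasDerivAt_P1 hx).differentiableAt.differentiableWithinAt
  · rw [interior_Ico]
    intro a ha b hb hab
    rw [(hasDerivAt_P1 ha).deriv, (hasDerivAt_P1 hb).deriv]
    exact antitoneOn_P2 ha hb hab

lemma pA_zero : pA 0 = 0 := by norm_num [pA]

lemma pA_one : pA 1 = 0 := by norm_num [pA]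

lemma pA_nonneg : ∀ x ∈ Ico (0:ℝ) 1, 0 ≤ pA x := by
  -- find the root b₀ of P1 in [1/2, 7/8]
  have hsub : Icc (1/2 : ℝ) (7/8) ⊆ Ico (0:ℝ) 1 := by
    intro t ht; exact ⟨by linarith [ht.1], by linarith [ht.2]⟩
  have hcont : ContinuousOn P1 (Icc (1/2 : ℝ) (7/8)) := by
    unfold P1
    have c1 : ContinuousOn (fun x : ℝ => Real.log (1 + x)) (Icc (1/2:ℝ) (7/8)) :=
      (continuousOn_const.add continuousOn_id).log fun x hx => by
        show (1:ℝ) + x ≠ 0; intro h; nlinarith [hx.1, hx.2]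
    have c2 : ContinuousOn (fun x : ℝ => Real.log (1 - x)) (Icc (1/2:ℝ) (7/8)) :=
      (continuousOn_const.sub continuousOn_id).log fun x hx => by
        show (1:ℝ) - x ≠ 0; intro h; nlinarith [hx.1, hx.2]
    exact ((continuousOn_const.mul continuousOn_id).sub c1).add c2
  have hivt := intermediate_value_Icc' (by norm_num : (1/2:ℝ) ≤ 7/8) hcont
  have h0mem : (0:ℝ) ∈ Icc (P1 (7/8)) (P1 (1/2)) := ⟨P1_neg.le, P1_half_pos.le⟩
  obtain ⟨b₀, hb₀mem, hb₀⟩ := hivt h0mem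
  have hb₀pos : (0:ℝ) < b₀ := by linarith [hb₀mem.1]
  have hb₀lt1 : b₀ < 1 := by linarith [hb₀mem.2]
  have h0I : (0:ℝ) ∈ Ico (0:ℝ) 1 := by norm_num
  have hbI : b₀ ∈ Ico (0:ℝ) 1 := ⟨hb₀pos.le, hb₀lt1⟩
  -- P1 ≥ 0 on [0, b₀]
  have claim1 : ∀ x ∈ Icc (0:ℝ) b₀, 0 ≤ P1 x := by
    intro x hx
    have ha : 0 ≤ 1 - x / b₀ := by
      rw [sub_nonneg, div_le_one hb₀pos]; exact hx.2
    have hb : 0 ≤ x / b₀ := div_nonneg hx.1 hb₀pos.le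
    have hab : (1 - x / b₀) + x / b₀ = 1 := by ring
    have h := concaveOn_P1.2 h0I hbI ha hb hab
    rw [smul_eq_mul, smul_eq_mul, smul_eq_mul, smul_eq_mul] at h
    have hc : (1 - x / b₀) * 0 + x / b₀ * b₀ = x := by field_simp; ring
    rw [hc, P1_zero, hb₀] at h
    linarith
  -- P1 ≤ 0 on (b₀, 1)
  have claim2 : ∀ x ∈ Ioo b₀ (1:ℝ), P1 x ≤ 0 := by
    intro x hx
    have hxpos : (0:ℝ) < x := lt_trans hb₀pos hx.1
    have hxI : x ∈ Ico (0:ℝ) 1 := ⟨hxpos.le, hx.2⟩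
    have ha : 0 ≤ 1 - b₀ / x := by
      rw [sub_nonneg, div_le_one hxpos]; exact hx.1.le
    have hb : 0 ≤ b₀ / x := div_nonneg hb₀pos.le hxpos.le
    have hab : (1 - b₀ / x) + b₀ / x = 1 := by ring
    have h := concaveOn_P1.2 h0I hxI ha hb hab
    rw [smul_eq_mul, smul_eq_mul, smul_eq_mul, smul_eq_mul] at h
    have hc : (1 - b₀ / x) * 0 + b₀ / x * x = b₀ := by field_simp; ring
    rw [hc, P1_zero, hb₀] at h
    have hbx : 0 < b₀ / x := div_pos hb₀pos hxpos
    nlinarith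
  -- pA is monotone on [0, b₀]
  have mono : MonotoneOn pA (Icc (0:ℝ) b₀) := by
    apply monotoneOn_of_deriv_nonneg (convex_Icc _ _) continuous_pA.continuousOn
    · rw [interior_Icc]
      intro x hx
      exact (hasDerivAt_pA ⟨hx.1, lt_trans hx.2 hb₀lt1⟩).differentiableAt.differentiableWithinAt
    · rw [interior_Icc]
      intro x hx
      rw [(hasDerivAt_pA ⟨hx.1, lt_trans hx.2 hb₀lt1⟩).deriv]
      exact claim1 x ⟨hx.1.le, hx.2.le⟩
  -- pA is antitone on [b₀, 1]
  have anti : AntitoneOn pA (Icc b₀ (1:ℝ)) := by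
    apply antitoneOn_of_deriv_nonpos (convex_Icc _ _) continuous_pA.continuousOn
    · rw [interior_Icc]
      intro x hx
      exact (hasDerivAt_pA ⟨lt_trans hb₀pos hx.1, hx.2⟩).differentiableAt.differentiableWithinAt
    · rw [interior_Icc]
      intro x hx
      rw [(hasDerivAt_pA ⟨lt_trans hb₀pos hx.1, hx.2⟩).deriv]
      exact claim2 x hx
  intro x hx
  rcases le_or_gt x b₀ with h | h
  · have := mono ⟨le_refl 0, hb₀pos.le⟩ ⟨hx.1, h⟩ hx.1
    rw [pA_zero] at this; exact this
  · have := anti ⟨h.le, hx.2.le⟩ ⟨hb₀lt1.le, le_refl 1⟩ hx.2.le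
    rw [pA_one] at this; exact this

lemma F1_one : F1 1 = 0 := by norm_num [F1]

lemma F1_fifth_pos : 0 < F1 (1/5) := by
  unfold F1
  rw [show ((1:ℝ)/5)^2 = 1/25 by norm_num, show (1:ℝ) + 1/25 = 26/25 by norm_num,
    Real.log_div one_ne_zero (by norm_num : (25:ℝ) ≠ 0),
    Real.log_div (by norm_num : (26:ℝ) ≠ 0) (by norm_num : (25:ℝ) ≠ 0), Real.log_one]
  have h1 : Real.log 26 < Real.log 32 := Real.log_lt_log (by norm_num) (by norm_num)
  have h2 : Real.log 32 = 5 * Real.log 2 := by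
    rw [show (32:ℝ) = 2^5 by norm_num, Real.log_pow]; norm_num
  linarith

lemma F1_quarter_neg : F1 (1/4) < 0 := by
  unfold F1
  rw [show ((1:ℝ)/4)^2 = 1/16 by norm_num, show (1:ℝ) + 1/16 = 17/16 by norm_num,
    Real.log_div one_ne_zero (by norm_num : (16:ℝ) ≠ 0),
    Real.log_div (by norm_num : (17:ℝ) ≠ 0) (by norm_num : (16:ℝ) ≠ 0), Real.log_one]
  have h1 : Real.log 16 < Real.log 17 := Real.log_lt_log (by norm_num) (by norm_num)
  have h2 : Real.log 16 = 4 * Real.log 2 := by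
    rw [show (16:ℝ) = 2^4 by norm_num, Real.log_pow]; norm_num
  linarith

lemma monotoneOn_F2 : MonotoneOn F2 (Ioo (0:ℝ) 1) := by
  intro a ha b hb hab
  unfold F2
  have ha0 := ha.1
  have ha1 := ha.2
  have hb0 := hb.1
  have hb1 := hb.2
  have hsa : (0:ℝ) < a^2 := by positivity
  have hsb : (0:ℝ) < b^2 := by positivity
  have hsa1 : (0:ℝ) < 1 + a^2 := by positivity
  have hsb1 : (0:ℝ) < 1 + b^2 := by positivity
  -- key log inequality : log (a²(1+b²)/(b²(1+a²))) ≤ a²(1+b²)/(b²(1+a²)) - 1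
  have hq : (0:ℝ) < a^2 * (1 + b^2) / (b^2 * (1 + a^2)) := by positivity
  have hlog := Real.log_le_sub_one_of_pos hq
  have hexp : Real.log (a^2 * (1 + b^2) / (b^2 * (1 + a^2)))
      = Real.log (a^2) + Real.log (1 + b^2) - (Real.log (b^2) + Real.log (1 + a^2)) := by
    rw [Real.log_div (by positivity) (by positivity), Real.log_mul (by positivity) (by positivity),
      Real.log_mul (by positivity) (by positivity)]
  rw [hexp] at hlog
  -- hlog : log a² + log(1+b²) - log b² - log(1+a²) ≤ a²(1+b²)/(b²(1+a²)) - 1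
  -- the RHS equals (a²-b²)/(b²(1+a²)) ≤ 0 ... we need a quantitative relation
  have hfrac : a^2 * (1 + b^2) / (b^2 * (1 + a^2)) - 1 = -((b^2 - a^2) / (b^2 * (1 + a^2))) := by
    field_simp; ring
  rw [hfrac] at hlog
  -- goal : 2 log a² - 2 log(1+a²) + 4/(1+a²) ≤ 2 log b² - 2 log(1+b²) + 4/(1+b²)
  -- from hlog : log b² + log(1+a²) - log a² - log(1+b²) ≥ (b²-a²)/(b²(1+a²))
  have hstep : (b^2 - a^2) / (b^2 * (1 + a^2)) ≥ 2 * ((b^2 - a^2) / ((1 + a^2) * (1 + b^2))) := by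
    have hd : (0:ℝ) ≤ b^2 - a^2 := by nlinarith
    have e : (b^2 - a^2) / (b^2 * (1 + a^2)) - 2 * ((b^2 - a^2) / ((1 + a^2) * (1 + b^2)))
        = (b^2 - a^2) * (1 - b^2) / (b^2 * (1 + a^2) * (1 + b^2)) := by
      field_simp; ring
    rw [ge_iff_le, ← sub_nonneg, e]
    apply div_nonneg (mul_nonneg hd (by nlinarith)) (by positivity)
  have hfq : 4/(1+a^2) - 4/(1+b^2) = 4 * ((b^2 - a^2) / ((1 + a^2) * (1 + b^2))) := by
    field_simp; ring
  nlinarith [hlog, hstep, hfq]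

lemma convexOn_F1 : ConvexOn ℝ (Ioc (0:ℝ) 1) F1 := by
  apply MonotoneOn.convexOn_of_deriv (convex_Ioc 0 1)
  · unfold F1
    have c1 : ContinuousOn (fun u : ℝ => Real.log (u ^ 2)) (Ioc (0:ℝ) 1) :=
      (continuousOn_pow 2).log fun x hx => by have := hx.1; positivity
    have c2 : ContinuousOn (fun u : ℝ => Real.log (1 + u ^ 2)) (Ioc (0:ℝ) 1) :=
      (continuousOn_const.add (continuousOn_pow 2)).log fun x hx => by show (1:ℝ) + x^2 ≠ 0; positivity
    exact (continuousOn_const.add ((continuousOn_const.mul continuousOn_id).mul c1)).sub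
      ((continuousOn_const.mul continuousOn_id).mul c2)
  · rw [interior_Ioc]
    intro u hu
    exact (hasDerivAt_F1 hu).differentiableAt.differentiableWithinAt
  · rw [interior_Ioc]
    intro a ha b hb hab
    rw [(hasDerivAt_F1 ha).deriv, (hasDerivAt_F1 hb).deriv]
    exact monotoneOn_F2 ha hb hab

lemma fB_zero : fB 0 = 0 := by norm_num [fB]

lemma fB_one : fB 1 = 0 := by norm_num [fB]

lemma fB_nonneg : ∀ u ∈ Icc (0:ℝ) 1, 0 ≤ fB u := by
  have hcont : ContinuousOn F1 (Icc (1/5:ℝ) (1/4)) := by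
    unfold F1
    have c1 : ContinuousOn (fun u : ℝ => Real.log (u ^ 2)) (Icc (1/5:ℝ) (1/4)) :=
      (continuousOn_pow 2).log fun x hx => by
        have hx0 : (0:ℝ) < x := by linarith [hx.1]
        positivity
    have c2 : ContinuousOn (fun u : ℝ => Real.log (1 + u ^ 2)) (Icc (1/5:ℝ) (1/4)) :=
      (continuousOn_const.add (continuousOn_pow 2)).log fun x hx => by show (1:ℝ) + x^2 ≠ 0; positivity
    exact (continuousOn_const.add ((continuousOn_const.mul continuousOn_id).mul c1)).sub
      ((continuousOn_const.mul continuousOn_id).mul c2)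
  have hivt := intermediate_value_Icc' (by norm_num : (1/5:ℝ) ≤ 1/4) hcont
  have h0mem : (0:ℝ) ∈ Icc (F1 (1/4)) (F1 (1/5)) := ⟨F1_quarter_neg.le, F1_fifth_pos.le⟩
  obtain ⟨a₁, ha₁mem, ha₁⟩ := hivt h0mem
  have ha₁pos : (0:ℝ) < a₁ := by have := ha₁mem.1; norm_num at this ⊢; linarith
  have ha₁lt1 : a₁ < 1 := by have := ha₁mem.2; norm_num at this ⊢; linarith
  have haI : a₁ ∈ Ioc (0:ℝ) 1 := ⟨ha₁pos, ha₁lt1.le⟩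
  have h1I : (1:ℝ) ∈ Ioc (0:ℝ) 1 := by norm_num
  have claim1 : ∀ x ∈ Ioo (0:ℝ) a₁, 0 ≤ F1 x := by
    intro x hx
    have hx0 := hx.1
    have hxa := hx.2
    have hx1 : x < 1 := lt_trans hxa ha₁lt1
    have hd : (0:ℝ) < 1 - x := by linarith
    have hxI : x ∈ Ioc (0:ℝ) 1 := ⟨hx0, hx1.le⟩
    have ha : 0 ≤ (1 - a₁) / (1 - x) := div_nonneg (by linarith) hd.le
    have hb : 0 ≤ (a₁ - x) / (1 - x) := div_nonneg (by linarith) hd.le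
    have hab : (1 - a₁)/(1 - x) + (a₁ - x)/(1 - x) = 1 := by field_simp; ring
    have h := convexOn_F1.2 hxI h1I ha hb hab
    rw [smul_eq_mul, smul_eq_mul, smul_eq_mul, smul_eq_mul] at h
    have hc : (1 - a₁)/(1 - x) * x + (a₁ - x)/(1 - x) * 1 = a₁ := by field_simp; ring
    rw [hc, ha₁, F1_one] at h
    have hapos : 0 < (1 - a₁)/(1 - x) := div_pos (by linarith) hd
    nlinarith
  have claim2 : ∀ x ∈ Icc a₁ (1:ℝ), F1 x ≤ 0 := by
    intro x hx
    have hd : (0:ℝ) < 1 - a₁ := by linarith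
    have hxI : x ∈ Ioc (0:ℝ) 1 := ⟨lt_of_lt_of_le ha₁pos hx.1, hx.2⟩
    have ha : 0 ≤ (1 - x)/(1 - a₁) := div_nonneg (by linarith [hx.2]) hd.le
    have hb : 0 ≤ (x - a₁)/(1 - a₁) := div_nonneg (by linarith [hx.1]) hd.le
    have hab : (1 - x)/(1 - a₁) + (x - a₁)/(1 - a₁) = 1 := by field_simp; ring
    have h := convexOn_F1.2 haI h1I ha hb hab
    rw [smul_eq_mul, smul_eq_mul, smul_eq_mul, smul_eq_mul] at h
    have hc : (1 - x)/(1 - a₁) * a₁ + (x - a₁)/(1 - a₁) * 1 = x := by field_simp; ring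
    rw [hc, ha₁, F1_one] at h
    linarith
  have mono : MonotoneOn fB (Icc (0:ℝ) a₁) := by
    apply monotoneOn_of_deriv_nonneg (convex_Icc _ _) continuous_fB.continuousOn
    · rw [interior_Icc]; intro x hx
      exact (hasDerivAt_fB ⟨hx.1, lt_trans hx.2 ha₁lt1⟩).differentiableAt.differentiableWithinAt
    · rw [interior_Icc]; intro x hx
      rw [(hasDerivAt_fB ⟨hx.1, lt_trans hx.2 ha₁lt1⟩).deriv]
      exact claim1 x hx
  have anti : AntitoneOn fB (Icc a₁ (1:ℝ)) := by
    apply antitoneOn_of_deriv_nonpos (convex_Icc _ _) continuous_fB.continuousOn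
    · rw [interior_Icc]; intro x hx
      exact (hasDerivAt_fB ⟨lt_trans ha₁pos hx.1, hx.2⟩).differentiableAt.differentiableWithinAt
    · rw [interior_Icc]; intro x hx
      rw [(hasDerivAt_fB ⟨lt_trans ha₁pos hx.1, hx.2⟩).deriv]
      exact claim2 x ⟨hx.1.le, hx.2.le⟩
  intro u hu
  rcases le_or_gt u a₁ with h | h
  · have := mono ⟨le_refl 0, ha₁pos.le⟩ ⟨hu.1, h⟩ hu.1
    rw [fB_zero] at this; exact this
  · have := anti ⟨h.le, hu.2⟩ ⟨ha₁lt1.le, le_refl 1⟩ hu.2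
    rw [fB_one] at this; exact this

theorem entropy_between_bhattacharyya_sq_and_itself :
    ∀ θ ∈ Set.Icc (0:ℝ) (1/2),
      4 * θ * (1 - θ) ≤ -θ * Real.logb 2 θ - (1 - θ) * Real.logb 2 (1 - θ) ∧
      -θ * Real.logb 2 θ - (1 - θ) * Real.logb 2 (1 - θ) ≤ 2 * Real.sqrt (θ * (1 - θ)) := by
  intro θ hθmem
  obtain ⟨hθ0, hθhalf⟩ := hθmem
  rcases eq_or_lt_of_le hθ0 with rfl | hθ
  · norm_num [Real.logb]
  constructor
  · -- lower bound
    have hx : 1 - 2*θ ∈ Ico (0:ℝ) 1 := ⟨by linarith, by linarith⟩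
    have hp := pA_nonneg _ hx
    unfold pA at hp
    rw [show (1:ℝ) + (1 - 2*θ) = 2*(1-θ) by ring, show (1:ℝ) - (1 - 2*θ) = 2*θ by ring,
      Real.log_mul two_ne_zero (by linarith : (1:ℝ) - θ ≠ 0),
      Real.log_mul two_ne_zero (ne_of_gt hθ)] at hp
    simp only [Real.logb]
    have hrw : -θ * (Real.log θ / Real.log 2) - (1-θ) * (Real.log (1-θ) / Real.log 2)
        = (-θ * Real.log θ - (1-θ) * Real.log (1-θ)) / Real.log 2 := by ring
    rw [hrw, le_div_iff₀ hL2]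
    nlinarith [hp]
  · -- upper bound
    have h1θ : (0:ℝ) < 1 - θ := by linarith
    set u := Real.sqrt (θ/(1-θ)) with hu
    have hquot : (0:ℝ) < θ/(1-θ) := div_pos hθ h1θ
    have hupos : 0 < u := Real.sqrt_pos.2 hquot
    have hule : u ≤ 1 :=
      Real.sqrt_le_one.mpr (by rw [div_le_one h1θ]; linarith)
    have hu2 : u^2 = θ/(1-θ) := Real.sq_sqrt hquot.le
    have hf := fB_nonneg u ⟨hupos.le, hule⟩
    unfold fB at hf
    have e1 : 1 + u^2 = 1/(1-θ) := by rw [hu2]; field_simp; ring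
    have e2 : Real.log (u^2) = Real.log θ - Real.log (1-θ) := by
      rw [hu2]; exact Real.log_div (ne_of_gt hθ) (ne_of_gt h1θ)
    have e3 : Real.log (1 + u^2) = -Real.log (1-θ) := by
      rw [e1, one_div, Real.log_inv]
    rw [e2, e3, e1, hu2] at hf
    -- hf : 0 ≤ 2*log 2*u + θ/(1-θ)*(log θ - log (1-θ)) - 1/(1-θ)*(-log (1-θ))
    have hpoly : 0 ≤ 2*Real.log 2*(u*(1-θ)) + θ*Real.log θ + (1-θ)*Real.log (1-θ) := by
      have h := mul_nonneg hf h1θ.le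
      have heq : (2*Real.log 2*u + θ/(1-θ)*(Real.log θ - Real.log (1-θ))
          - 1/(1-θ)*(-Real.log (1-θ))) * (1-θ)
          = 2*Real.log 2*(u*(1-θ)) + θ*Real.log θ + (1-θ)*Real.log (1-θ) := by
        field_simp; ring
      rw [heq] at h
      exact h
    have husq : u * (1-θ) = Real.sqrt (θ*(1-θ)) := by
      have h1 : Real.sqrt (θ/(1-θ)) * Real.sqrt ((1-θ)^2) = Real.sqrt (θ*(1-θ)) := by
        rw [← Real.sqrt_mul (le_of_lt hquot)]
        congr 1
        field_simp
      rw [Real.sqrt_sq h1θ.le] at h1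
      rw [hu]
      exact h1
    rw [husq] at hpoly
    simp only [Real.logb]
    have hrw : -θ * (Real.log θ / Real.log 2) - (1-θ) * (Real.log (1-θ) / Real.log 2)
        = (-θ * Real.log θ - (1-θ) * Real.log (1-θ)) / Real.log 2 := by ring
    rw [hrw, div_le_iff₀ hL2]
    nlinarith [hpoly]
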